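/- Let f(n)=n! and let T = {t_1 < t_2 < ...} be an infinite subset of ℕ with blocks I_k(T) as in the paper. If Δ = ⋃_{k≥1} I_{4k+2}(T) ∪ I_2(T), then the upper asymptotic density of Δ is 1. -/

import Mathlib

open Filter Topology

noncomputable def upperDensity (S : Set ℕ) : ℝ :=
  Filter.limsup (fun n : ℕ => (Nat.card (↥(S ∩ Set.Icc 1 n)) : ℝ) / (n : ℝ)) Filter.atTop

/-- Blocks of an infinite set T = {t_1 < t_2 < ⋯}: I_1(T) = [0, f(t_1)) ∩ ℕ,
I_k(T) = [f(t_{k-1}), f(t_k)) ∩ ℕ for k > 1, with f(n) = n!. -/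
def enumBlock (t : ℕ → ℕ) (k : ℕ) : Set ℕ :=
  if k ≤ 1 then Set.Ico 0 (Nat.factorial (t 1))
  else Set.Ico (Nat.factorial (t (k - 1))) (Nat.factorial (t k))

lemma card_set_Icc (a b : ℕ) : Nat.card (Set.Icc a b) = b + 1 - a := by
  rw [← Finset.coe_Icc, Nat.card_coe_set_eq, Set.ncard_coe_finset, Nat.card_Icc]

/-- Δ = I_2(T) ∪ ⋃_{k≥1} I_{4k+2}(T) has upper asymptotic
density 1. -/
theorem stmt_14 (t : ℕ → ℕ) (ht : StrictMono t) :
    upperDensity (enumBlock t 2 ∪ ⋃ k ∈ Set.Ici 1, enumBlock t (4 * k + 2)) = 1 := by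
  set S : Set ℕ := enumBlock t 2 ∪ ⋃ k ∈ Set.Ici 1, enumBlock t (4 * k + 2) with hS
  set u : ℕ → ℝ := fun n => (Nat.card (↥(S ∩ Set.Icc 1 n)) : ℝ) / (n : ℝ) with hu
  have hu0 : ∀ n, 0 ≤ u n := fun n => div_nonneg (Nat.cast_nonneg _) (Nat.cast_nonneg _)
  have hu1 : ∀ n, u n ≤ 1 := by
    intro n
    rcases Nat.eq_zero_or_pos n with h | h
    · simp [hu, h]
    · have hcard : Nat.card (↥(S ∩ Set.Icc 1 n)) ≤ n := by
        have h2 := Nat.card_mono (Set.finite_Icc 1 n) (Set.inter_subset_right (s := S))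
        rwa [card_set_Icc, Nat.add_sub_cancel] at h2
      rw [hu, div_le_one (by exact_mod_cast h)]
      exact_mod_cast hcard
  set a : ℕ → ℕ := fun k => Nat.factorial (t (4 * k + 1)) with ha
  set b : ℕ → ℕ := fun k => Nat.factorial (t (4 * k + 2)) with hb
  have htk : ∀ k, (k : ℕ) ≤ t k := fun k => (ht.id_le k)
  have hab : ∀ k, (4 * k + 2) * a k ≤ b k := by
    intro k
    have h1 : t (4 * k + 1) + 1 ≤ t (4 * k + 2) :=
      Nat.succ_le_of_lt (ht (by omega))
    have h2 : Nat.factorial (t (4 * k + 1) + 1) ≤ b k := Nat.factorial_le h1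
    rw [Nat.factorial_succ] at h2
    have h3 : 4 * k + 2 ≤ t (4 * k + 1) + 1 := by
      have := htk (4 * k + 1); omega
    calc (4 * k + 2) * a k ≤ (t (4 * k + 1) + 1) * a k :=
          Nat.mul_le_mul_right _ h3
      _ ≤ b k := h2
  have ha1 : ∀ k, 1 ≤ a k := fun k => Nat.one_le_iff_ne_zero.mpr (Nat.factorial_ne_zero _)
  have hb2 : ∀ k, 2 ≤ b k := by
    intro k
    have h1 := hab k
    have h2 := ha1 k
    nlinarith
  -- lower bound along the subsequence n ↦ b k - 1
  have key : ∀ k : ℕ, 1 - 1 / (4 * (k : ℝ) + 2) ≤ u (b k - 1) := by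
    intro k
    have hbk := hb2 k
    have hak := ha1 k
    have habk := hab k
    have haltb : a k < b k := by nlinarith
    have hsub : Set.Icc (a k) (b k - 1) ⊆ S ∩ Set.Icc 1 (b k - 1) := by
      intro x hx
      simp only [Set.mem_Icc] at hx
      constructor
      · rcases Nat.eq_zero_or_pos k with hk0 | hk0
        · left
          subst hk0
          rw [enumBlock, if_neg (by omega)]
          refine Set.mem_Ico.mpr ⟨?_, ?_⟩
          · have := hx.1
            simpa [ha] using this
          · have h1 := hx.2
            have : b 0 = Nat.factorial (t 2) := rfl
            omega
        · right
          refine Set.mem_biUnion (Set.mem_Ici.mpr hk0) ?_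
          rw [enumBlock, if_neg (by omega)]
          have e : 4 * k + 2 - 1 = 4 * k + 1 := by omega
          rw [e]
          refine Set.mem_Ico.mpr ⟨hx.1, ?_⟩
          have h1 := hx.2
          have : b k = Nat.factorial (t (4 * k + 2)) := rfl
          omega
      · exact ⟨le_trans hak hx.1, hx.2⟩
    have hfin : (S ∩ Set.Icc 1 (b k - 1)).Finite :=
      (Set.finite_Icc 1 (b k - 1)).subset Set.inter_subset_right
    have hcard : b k - a k ≤ Nat.card (↥(S ∩ Set.Icc 1 (b k - 1))) := by
      have h1 := Nat.card_mono hfin hsub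
      rwa [card_set_Icc, show b k - 1 + 1 - a k = b k - a k by omega] at h1
    have hbR : (2 : ℝ) ≤ (b k : ℝ) := by exact_mod_cast hbk
    have haR : (1 : ℝ) ≤ (a k : ℝ) := by exact_mod_cast hak
    have habR : (4 * (k : ℝ) + 2) * (a k : ℝ) ≤ (b k : ℝ) := by exact_mod_cast habk
    have hn : ((b k - 1 : ℕ) : ℝ) = (b k : ℝ) - 1 := by
      rw [Nat.cast_sub (by omega), Nat.cast_one]
    have hcardR : (b k : ℝ) - (a k : ℝ) ≤ (Nat.card (↥(S ∩ Set.Icc 1 (b k - 1))) : ℝ) := by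
      rw [← Nat.cast_sub (le_of_lt haltb)]
      exact_mod_cast hcard
    have hden : (0 : ℝ) < (b k : ℝ) - 1 := by linarith
    have hkge : (2 : ℝ) ≤ 4 * (k : ℝ) + 2 := by
      have : (0 : ℝ) ≤ (k : ℝ) := Nat.cast_nonneg k
      linarith
    have hcpos : (0 : ℝ) < 4 * (k : ℝ) + 2 := by linarith
    have hstep : 1 - 1 / (4 * (k : ℝ) + 2) ≤ ((b k : ℝ) - (a k : ℝ)) / ((b k : ℝ) - 1) := by
      have h1 : 1 - 1 / (4 * (k : ℝ) + 2) = (4 * (k : ℝ) + 2 - 1) / (4 * (k : ℝ) + 2) := by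
        field_simp
      rw [h1, div_le_div_iff₀ hcpos hden]
      nlinarith
    calc 1 - 1 / (4 * (k : ℝ) + 2) ≤ ((b k : ℝ) - (a k : ℝ)) / ((b k : ℝ) - 1) := hstep
      _ ≤ u (b k - 1) := by
          rw [hu]
          simp only
          rw [hn]
          gcongr
  -- the subsequence tends to infinity
  set nk : ℕ → ℕ := fun k => b k - 1 with hnkdef
  have hnk : Tendsto nk atTop atTop := by
    apply tendsto_atTop_mono (f := fun k : ℕ => (k : ℕ)) (fun k => ?_) tendsto_id
    have h1 := hab k; have h2 := ha1 k
    have h3 : 4 * k + 2 ≤ b k := le_trans (Nat.le_mul_of_pos_right _ (by omega)) h1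
    simp only [hnkdef]
    omega
  -- u ∘ nk tends to 1
  have hlow : Tendsto (fun k : ℕ => 1 - 1 / (4 * (k : ℝ) + 2)) atTop (𝓝 1) := by
    have h0 : Tendsto (fun k : ℕ => (4 * (k : ℝ) + 2)) atTop atTop := by
      apply tendsto_atTop_add_const_right
      exact Tendsto.const_mul_atTop (by norm_num) tendsto_natCast_atTop_atTop
    have h1 : Tendsto (fun k : ℕ => 1 / (4 * (k : ℝ) + 2)) atTop (𝓝 0) := by
      simpa [one_div, Pi.inv_def] using h0.inv_tendsto_atTop
    have := tendsto_const_nhds (x := (1 : ℝ)) (f := atTop (α := ℕ)) |>.sub h1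
    simpa using this
  have hlim : Tendsto (fun k => u (nk k)) atTop (𝓝 1) :=
    tendsto_of_tendsto_of_tendsto_of_le_of_le hlow tendsto_const_nhds
      (fun k => key k) (fun k => hu1 _)
  -- upper bound on limsup
  have hbdd : IsBoundedUnder (· ≤ ·) (atTop : Filter ℕ) u := isBoundedUnder_of ⟨1, hu1⟩
  have hcob : IsCoboundedUnder (· ≤ ·) (atTop : Filter ℕ) u :=
    (isBoundedUnder_of ⟨0, hu0⟩ : IsBoundedUnder (· ≥ ·) atTop u).isCoboundedUnder_le
  have h1 : limsup u atTop ≤ 1 := limsup_le_of_le hcob (Eventually.of_forall hu1)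
  have h2 : 1 ≤ limsup u atTop := by
    apply le_of_forall_lt_imp_le_of_dense
    intro c hc
    have hev : ∀ᶠ k in atTop, c ≤ u (nk k) :=
      (hlim.eventually (eventually_gt_nhds hc)).mono fun k h => h.le
    exact le_limsup_of_frequently_le (hnk.frequently hev.frequently) hbdd
  rw [upperDensity]
  exact le_antisymm h1 h2
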